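/- Let S be a numerical semigroup. For all elements s₁, s₂ ∈ S, one has ord_S(s₁+s₂) ≤ ord_S(s₁) + ord_S(s₂) + min{ l_{s₁}(S), l_{s₂}(S) }. -/

import Mathlib

open scoped Pointwise

/-- `S ⊆ ℕ` is a numerical semigroup: it contains `0`, is closed under
addition, and has finite complement in `ℕ`. -/
def IsNumSgp (S : Set ℕ) : Prop :=
  (0 : ℕ) ∈ S ∧ (∀ a ∈ S, ∀ b ∈ S, a + b ∈ S) ∧ {x : ℕ | x ∉ S}.Finite

/-- `nM S t` is the `t`-fold sumset of the maximal ideal `M = S \ {0}`,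
with the convention `nM S 0 = S`. -/
def nM (S : Set ℕ) : ℕ → Set ℕ
  | 0 => S
  | t + 1 => (S \ {0}) + nM S t

/-- the order of `s` with respect to `S` : the largest `t` with `s ∈ tM`. -/
noncomputable def ordS (S : Set ℕ) (s : ℕ) : ℕ := sSup {t : ℕ | s ∈ nM S t}

/-- the multiplicity of `S` : its least nonzero element. -/
noncomputable def mult (S : Set ℕ) : ℕ := sInf {x : ℕ | x ∈ S ∧ x ≠ 0}

/-- the Apéry set of `S` with respect to `x` : elements `s ∈ S` with `s - x ∉ S`. -/
def Ap (S : Set ℕ) (x : ℕ) : Set ℕ := {s : ℕ | s ∈ S ∧ ¬ ∃ t ∈ S, s = t + x}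

/-- membership of an integer in (the image in `ℤ` of) `S`. -/
def zmem (S : Set ℕ) (z : ℤ) : Prop := ∃ t ∈ S, (t : ℤ) = z

/-- the Frobenius number of `S` : the largest integer not in `S`. -/
noncomputable def Frob (S : Set ℕ) : ℤ := sSup {z : ℤ | ¬ zmem S z}

/-- `S` is symmetric: for every integer `z`, `z ∈ S` iff `F(S) - z ∉ S`. -/
def IsSymmetric (S : Set ℕ) : Prop := ∀ z : ℤ, zmem S z ↔ ¬ zmem S (Frob S - z)

/-- the set of maximal elements of `Ap S x` with respect to the order
`u ⪯ v` iff `v = u + z` for some `z ∈ S`. -/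
def MaxAp (S : Set ℕ) (x : ℕ) : Set ℕ :=
  {w : ℕ | w ∈ Ap S x ∧ ∀ y ∈ Ap S x, (∃ z ∈ S, y = w + z) → y = w}

/-- the set of maximal elements of `Ap S x` with respect to the order
`u ⪯_M v` iff `v = u + z` for some `z ∈ S` with `ord(v) = ord(u) + ord(z)`. -/
def MaxMAp (S : Set ℕ) (x : ℕ) : Set ℕ :=
  {w : ℕ | w ∈ Ap S x ∧ ∀ y ∈ Ap S x,
    (∃ z ∈ S, y = w + z ∧ ordS S y = ordS S w + ordS S z) → y = w}

/-- `S` is M-pure with respect to `x` : all maximal elements of `Ap S x`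
under `⪯_M` have the same order. -/
def MPureWrt (S : Set ℕ) (x : ℕ) : Prop :=
  ∀ w ∈ MaxMAp S x, ∀ w' ∈ MaxMAp S x, ordS S w = ordS S w'

/-- `S` is M-pure : it is M-pure with respect to its multiplicity. -/
def MPure (S : Set ℕ) : Prop := MPureWrt S (mult S)

/-- `β_i(x)` : the number of elements of `Ap S x` of order `i`. -/
noncomputable def betaS (S : Set ℕ) (x i : ℕ) : ℕ := {w ∈ Ap S x | ordS S w = i}.ncard

/-- `d(x)` : the maximal order of an element of `Ap S x`. -/
noncomputable def dS (S : Set ℕ) (x : ℕ) : ℕ := sSup (ordS S '' Ap S x)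

/-- the reduction number of `S` : the least `r` with `(r+1)M = m(S) + rM`. -/
noncomputable def redNum (S : Set ℕ) : ℕ :=
  sInf {r : ℕ | nM S (r + 1) = (fun y => mult S + y) '' nM S r}

/-- `l_x(S) = max { ord(s+x) - ord(x) - ord(s) : s ∈ S, ord(s) ≤ r }`. -/
noncomputable def lS (S : Set ℕ) (x : ℕ) : ℕ :=
  sSup {t : ℕ | ∃ s ∈ S, ordS S s ≤ redNum S ∧ t = ordS S (s + x) - ordS S x - ordS S s}

/-- the Hilbert function of `S`. -/
noncomputable def HilbS (S : Set ℕ) (t : ℕ) : ℕ := (nM S t \ nM S (t + 1)).ncard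

/-- The data of a gluing `S = ⟨q m₁, …, q m_d, p n₁, …, p n_k⟩` of two numerical
semigroups `S₁ = ⟨m₁, …, m_d⟩` and `S₂ = ⟨n₁, …, n_k⟩`, minimally generated by
`m₁ < ⋯ < m_d` and `n₁ < ⋯ < n_k`, where `p ∈ S₁ \ {m₁, …, m_d}`,
`q ∈ S₂ \ {n₁, …, n_k}` and `gcd(p, q) = 1`. -/
structure Gluing where
  d : ℕ
  k : ℕ
  hd : 0 < d
  hk : 0 < k
  m : Fin d → ℕ
  n : Fin k → ℕ
  p : ℕ
  q : ℕ
  hm : StrictMono m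
  hn : StrictMono n
  hmin₁ : ∀ i, m i ∉ AddSubmonoid.closure (Set.range m \ {m i})
  hmin₂ : ∀ j, n j ∉ AddSubmonoid.closure (Set.range n \ {n j})
  hnum₁ : IsNumSgp (AddSubmonoid.closure (Set.range m) : Set ℕ)
  hnum₂ : IsNumSgp (AddSubmonoid.closure (Set.range n) : Set ℕ)
  hp : p ∈ AddSubmonoid.closure (Set.range m)
  hq : q ∈ AddSubmonoid.closure (Set.range n)
  hpm : p ∉ Set.range m
  hqn : q ∉ Set.range n
  hpq : Nat.gcd p q = 1

/-- the numerical semigroup `S₁ = ⟨m₁, …, m_d⟩`. -/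
def Gluing.S₁ (G : Gluing) : Set ℕ := (AddSubmonoid.closure (Set.range G.m) : Set ℕ)

/-- the numerical semigroup `S₂ = ⟨n₁, …, n_k⟩`. -/
def Gluing.S₂ (G : Gluing) : Set ℕ := (AddSubmonoid.closure (Set.range G.n) : Set ℕ)

/-- the glued numerical semigroup `S = ⟨q m₁, …, q m_d, p n₁, …, p n_k⟩`. -/
def Gluing.S (G : Gluing) : Set ℕ :=
  (AddSubmonoid.closure
    ((fun x => G.q * x) '' Set.range G.m ∪ (fun x => G.p * x) '' Set.range G.n) : Set ℕ)

/-- the smallest generator `m₁` of `S₁`. -/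
def Gluing.m₁ (G : Gluing) : ℕ := G.m ⟨0, G.hd⟩

/-- the smallest generator `n₁` of `S₂`. -/
def Gluing.n₁ (G : Gluing) : ℕ := G.n ⟨0, G.hk⟩

/-- the gluing is specific if `ord_{S₂}(q) + l_q(S₂) ≤ ord_{S₁}(p)`. -/
def Gluing.Specific (G : Gluing) : Prop := ordS G.S₂ G.q + lS G.S₂ G.q ≤ ordS G.S₁ G.p

/-- the gluing is nice if `q = a n₁` for some `1 < a ≤ ord_{S₁}(p)`. -/
def Gluing.Nice (G : Gluing) : Prop := ∃ a : ℕ, 1 < a ∧ a ≤ ordS G.S₁ G.p ∧ G.q = a * G.n₁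

/-! ### Auxiliary lemmas for stmt3 -/

section Stmt3Aux

variable {S : Set ℕ}

lemma nM_succ' (S : Set ℕ) (t : ℕ) : nM S (t + 1) = (S \ {0}) + nM S t := rfl

lemma nM_subset' (hS : IsNumSgp S) : ∀ t, nM S t ⊆ S
  | 0 => fun _ hx => hx
  | (t + 1) => by
      intro x hx
      rw [nM_succ', Set.mem_add] at hx
      obtain ⟨m, hm, y, hy, rfl⟩ := hx
      exact hS.2.1 m hm.1 y (nM_subset' hS t hy)

lemma le_of_mem_nM' : ∀ t, ∀ x ∈ nM S t, t ≤ x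
  | 0 => fun x _ => Nat.zero_le x
  | (t + 1) => by
      intro x hx
      rw [nM_succ', Set.mem_add] at hx
      obtain ⟨m, hm, y, hy, rfl⟩ := hx
      have h1 : 1 ≤ m := Nat.one_le_iff_ne_zero.2 (by simpa using hm.2)
      have h2 := le_of_mem_nM' t y hy
      omega

lemma S_add_nM' (hS : IsNumSgp S) : ∀ t, ∀ s ∈ S, ∀ y ∈ nM S t, s + y ∈ nM S t
  | 0 => fun s hs y hy => hS.2.1 s hs y hy
  | (t + 1) => by
      intro s hs y hy
      rw [nM_succ', Set.mem_add] at hy ⊢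
      obtain ⟨m, hm, z, hz, rfl⟩ := hy
      exact ⟨m, hm, s + z, S_add_nM' hS t s hs z hz, by omega⟩

lemma nM_add_nM' (hS : IsNumSgp S) :
    ∀ p q x y, x ∈ nM S p → y ∈ nM S q → x + y ∈ nM S (p + q)
  | 0 => fun q x y hx hy => by
      simpa using S_add_nM' hS q x hx y hy
  | (p + 1) => by
      intro q x y hx hy
      rw [nM_succ', Set.mem_add] at hx
      obtain ⟨m, hm, z, hz, rfl⟩ := hx
      have h := nM_add_nM' hS p q z y hz hy
      have : m + (z + y) ∈ nM S (p + q + 1) := by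
        rw [nM_succ', Set.mem_add]; exact ⟨m, hm, z + y, h, rfl⟩
      have harith : p + 1 + q = p + q + 1 := by omega
      rw [harith]
      simpa [add_assoc] using this

lemma bddAbove_ordSet (s : ℕ) : BddAbove {t | s ∈ nM S t} :=
  ⟨s, fun t ht => le_of_mem_nM' t s ht⟩

lemma mem_nM_ordS' {s : ℕ} (hs : s ∈ S) : s ∈ nM S (ordS S s) := by
  have hne : {t | s ∈ nM S t}.Nonempty := ⟨0, hs⟩
  exact Nat.sSup_mem hne (bddAbove_ordSet s)

lemma le_ordS' {s t : ℕ} (h : s ∈ nM S t) : t ≤ ordS S s :=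
  le_csSup (bddAbove_ordSet s) h

lemma ordS_superadd (hS : IsNumSgp S) {a b : ℕ} (ha : a ∈ S) (hb : b ∈ S) :
    ordS S a + ordS S b ≤ ordS S (a + b) :=
  le_ordS' (nM_add_nM' hS _ _ _ _ (mem_nM_ordS' ha) (mem_nM_ordS' hb))

lemma exists_conductor (hS : IsNumSgp S) : ∃ c, 0 < c ∧ ∀ x, c ≤ x → x ∈ S := by
  have hb : BddAbove {x : ℕ | x ∉ S} := hS.2.2.bddAbove
  rw [bddAbove_def] at hb
  obtain ⟨c₀, hc₀⟩ := hb
  refine ⟨c₀ + 1, by omega, fun x hx => ?_⟩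
  by_contra hxS
  have := hc₀ x hxS
  omega

lemma mult_mem (hS : IsNumSgp S) : mult S ∈ S ∧ mult S ≠ 0 := by
  obtain ⟨c, hc0, hc⟩ := exists_conductor hS
  have hne : {x : ℕ | x ∈ S ∧ x ≠ 0}.Nonempty := ⟨c, hc c le_rfl, by omega⟩
  exact Nat.sInf_mem hne

lemma mult_mem_M (hS : IsNumSgp S) : mult S ∈ S \ {0} :=
  ⟨(mult_mem hS).1, by simpa using (mult_mem hS).2⟩

lemma mul_mult_mem_nM (hS : IsNumSgp S) : ∀ k, k * mult S ∈ nM S k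
  | 0 => by simpa [nM] using hS.1
  | (k + 1) => by
      rw [nM_succ', Set.mem_add]
      exact ⟨mult S, mult_mem_M hS, k * mult S, mul_mult_mem_nM hS k, by ring⟩

lemma mem_nM_of_big (hS : IsNumSgp S) {c : ℕ} (hc : ∀ x, c ≤ x → x ∈ S)
    (t s : ℕ) (h : c + t * mult S ≤ s) : s ∈ nM S t := by
  have h1 : s - t * mult S ∈ S := hc _ (by omega)
  have h2 := nM_add_nM' hS t 0 _ _ (mul_mult_mem_nM hS t) h1
  have heq : t * mult S + (s - t * mult S) = s := by omega
  simpa [heq] using h2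

lemma lt_of_ordS_le (hS : IsNumSgp S) {c : ℕ} (hc : ∀ x, c ≤ x → x ∈ S)
    {s r : ℕ} (h : ordS S s ≤ r) : s < c + (r + 1) * mult S := by
  by_contra hcon
  have h1 : s ∈ nM S (r + 1) := mem_nM_of_big hS hc (r + 1) s (by omega)
  have h2 := le_ordS' h1
  omega

lemma nM_succ_decomp (hS : IsNumSgp S) :
    ∀ t, ∀ x ∈ nM S (t + 1),
      (∃ y ∈ nM S t, x = mult S + y) ∨ (t + 1) * (mult S + 1) ≤ x
  | 0 => by
      intro x hx
      rw [nM_succ', Set.mem_add] at hx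
      obtain ⟨m, hm, y, hy, rfl⟩ := hx
      by_cases hme : m = mult S
      · exact Or.inl ⟨y, hy, by omega⟩
      · have h1 : mult S ≤ m := Nat.sInf_le ⟨hm.1, by simpa using hm.2⟩
        exact Or.inr (by omega)
  | (t + 1) => by
      intro x hx
      rw [nM_succ', Set.mem_add] at hx
      obtain ⟨m, hm, y, hy, rfl⟩ := hx
      rcases nM_succ_decomp hS t y hy with ⟨y', hy', rfl⟩ | hbig
      · refine Or.inl ⟨m + y', ?_, by omega⟩
        rw [nM_succ', Set.mem_add]
        exact ⟨m, hm, y', hy', rfl⟩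
      · by_cases hme : m = mult S
        · exact Or.inl ⟨y, hy, by omega⟩
        · have h1 : mult S ≤ m := Nat.sInf_le ⟨hm.1, by simpa using hm.2⟩
          have harith : (t + 1 + 1) * (mult S + 1) = (t + 1) * (mult S + 1) + (mult S + 1) := by
            ring
          exact Or.inr (by omega)

lemma mult_add_mem_nM_succ (hS : IsNumSgp S) {t y : ℕ} (hy : y ∈ nM S t) :
    mult S + y ∈ nM S (t + 1) := by
  rw [nM_succ', Set.mem_add]
  exact ⟨mult S, mult_mem_M hS, y, hy, rfl⟩

lemma conductor_mem_redSet (hS : IsNumSgp S) {c : ℕ} (hc0 : 0 < c)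
    (hc : ∀ x, c ≤ x → x ∈ S) :
    nM S (c + 1) = (fun y => mult S + y) '' nM S c := by
  ext x
  constructor
  · intro hx
    rcases nM_succ_decomp hS c x hx with ⟨y, hy, rfl⟩ | hbig
    · exact ⟨y, hy, rfl⟩
    · have harith : (c + 1) * (mult S + 1) = c * mult S + mult S + c + 1 := by ring
      have h1 : x - mult S ∈ nM S c := mem_nM_of_big hS hc c _ (by omega)
      exact ⟨x - mult S, h1, by simp; omega⟩
  · rintro ⟨y, hy, rfl⟩
    exact mult_add_mem_nM_succ hS hy

lemma redNum_spec (hS : IsNumSgp S) :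
    nM S (redNum S + 1) = (fun y => mult S + y) '' nM S (redNum S) := by
  obtain ⟨c, hc0, hc⟩ := exists_conductor hS
  have hne : {r : ℕ | nM S (r + 1) = (fun y => mult S + y) '' nM S r}.Nonempty :=
    ⟨c, conductor_mem_redSet hS hc0 hc⟩
  exact Nat.sInf_mem hne

lemma nM_shift (hS : IsNumSgp S) :
    ∀ k, nM S (redNum S + k + 1) = (fun y => mult S + y) '' nM S (redNum S + k)
  | 0 => redNum_spec hS
  | (k + 1) => by
      ext x
      constructor
      · intro hx
        have hx' : x ∈ (S \ {0}) + nM S (redNum S + k + 1) := hx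
        rw [Set.mem_add] at hx'
        obtain ⟨m, hm, y, hy, rfl⟩ := hx'
        rw [nM_shift hS k] at hy
        obtain ⟨z, hz, hzeq⟩ := hy
        have hzeq' : mult S + z = y := hzeq
        refine ⟨m + z, ?_, ?_⟩
        · rw [show redNum S + (k + 1) = (redNum S + k) + 1 from by omega,
            nM_succ', Set.mem_add]
          exact ⟨m, hm, z, hz, rfl⟩
        · show mult S + (m + z) = m + y
          omega
      · rintro ⟨y, hy, rfl⟩
        exact mult_add_mem_nM_succ hS hy

lemma nM_decomp_high (hS : IsNumSgp S) :
    ∀ k x, x ∈ nM S (redNum S + k) → ∃ u ∈ nM S (redNum S), x = k * mult S + u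
  | 0 => fun x hx => ⟨x, hx, by simp⟩
  | (k + 1) => by
      intro x hx
      have hx' : x ∈ nM S (redNum S + k + 1) := by
        rwa [show redNum S + (k + 1) = redNum S + k + 1 from by omega] at hx
      rw [nM_shift hS k] at hx'
      obtain ⟨y, hy, hyeq⟩ := hx'
      have hyeq' : mult S + y = x := hyeq
      obtain ⟨u, hu, hyd⟩ := nM_decomp_high hS k y hy
      refine ⟨u, hu, ?_⟩
      have harith : (k + 1) * mult S = mult S + k * mult S := by ring
      omega

lemma decomp_ord (hS : IsNumSgp S) {s : ℕ} (hs : s ∈ S) (h : redNum S ≤ ordS S s) :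
    ∃ u ∈ S, ordS S u = redNum S ∧ s = (ordS S s - redNum S) * mult S + u := by
  have h1 : s ∈ nM S (redNum S + (ordS S s - redNum S)) := by
    rw [show redNum S + (ordS S s - redNum S) = ordS S s from by omega]
    exact mem_nM_ordS' hs
  obtain ⟨u, hu, heq⟩ := nM_decomp_high hS (ordS S s - redNum S) s h1
  have huS : u ∈ S := nM_subset' hS _ hu
  have h2 : redNum S ≤ ordS S u := le_ordS' hu
  have h3 : (ordS S s - redNum S) + ordS S u ≤ ordS S s := by
    have := nM_add_nM' hS (ordS S s - redNum S) (ordS S u) _ _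
      (mul_mult_mem_nM hS _) (mem_nM_ordS' huS)
    rw [← heq] at this
    exact le_ordS' this
  exact ⟨u, huS, by omega, heq⟩

lemma ord_mul_mult_add_le (hS : IsNumSgp S) {w : ℕ} (hw : w ∈ S)
    (hr : redNum S ≤ ordS S w) (a : ℕ) :
    ordS S (a * mult S + w) ≤ a + ordS S w := by
  set W := ordS S (a * mult S + w) with hWdef
  have haS : a * mult S ∈ S := nM_subset' hS a (mul_mult_mem_nM hS a)
  have hawS : a * mult S + w ∈ S := hS.2.1 _ haS _ hw
  have hW1 : a + ordS S w ≤ W := by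
    have := nM_add_nM' hS a (ordS S w) _ _ (mul_mult_mem_nM hS a) (mem_nM_ordS' hw)
    exact le_ordS' this
  have hWr : redNum S ≤ W := by omega
  have h1 : a * mult S + w ∈ nM S (redNum S + (W - redNum S)) := by
    rw [show redNum S + (W - redNum S) = W from by omega]
    exact mem_nM_ordS' hawS
  obtain ⟨u, hu, heq⟩ := nM_decomp_high hS (W - redNum S) _ h1
  have hWa : a ≤ W - redNum S := by omega
  have hsplit : (W - redNum S) * mult S = a * mult S + (W - redNum S - a) * mult S := by
    rw [← add_mul]; congr 1; omega
  have heq2 : w = (W - redNum S - a) * mult S + u := by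
    rw [hsplit] at heq; omega
  have h2 : w ∈ nM S ((W - redNum S - a) + redNum S) := by
    rw [heq2]
    exact nM_add_nM' hS _ _ _ _ (mul_mult_mem_nM hS _) hu
  have h3 := le_ordS' h2
  omega

lemma bddAbove_lSet (hS : IsNumSgp S) {x : ℕ} (hx : x ∈ S) :
    BddAbove {t : ℕ | ∃ s ∈ S, ordS S s ≤ redNum S ∧
      t = ordS S (s + x) - ordS S x - ordS S s} := by
  obtain ⟨c, hc0, hc⟩ := exists_conductor hS
  refine ⟨c + (redNum S + 1) * mult S + x, ?_⟩
  rintro t ⟨s, hs, hsr, rfl⟩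
  have h1 : s < c + (redNum S + 1) * mult S := lt_of_ordS_le hS hc hsr
  have h2 : ordS S (s + x) ≤ s + x :=
    le_of_mem_nM' _ _ (mem_nM_ordS' (hS.2.1 s hs x hx))
  omega

lemma ord_add_le_l (hS : IsNumSgp S) {s x : ℕ} (hs : s ∈ S)
    (hsr : ordS S s ≤ redNum S) (hx : x ∈ S) :
    ordS S (s + x) ≤ ordS S s + ordS S x + lS S x := by
  have hmem : (ordS S (s + x) - ordS S x - ordS S s) ∈
      {t : ℕ | ∃ s' ∈ S, ordS S s' ≤ redNum S ∧
        t = ordS S (s' + x) - ordS S x - ordS S s'} := ⟨s, hs, hsr, rfl⟩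
  have hle : ordS S (s + x) - ordS S x - ordS S s ≤ lS S x :=
    le_csSup (bddAbove_lSet hS hx) hmem
  have hsuper : ordS S s + ordS S x ≤ ordS S (s + x) := ordS_superadd hS hs hx
  omega

lemma ord_add_le_main (hS : IsNumSgp S) {s₁ x : ℕ} (h1 : s₁ ∈ S) (hx : x ∈ S) :
    ordS S (s₁ + x) ≤ ordS S s₁ + ordS S x + lS S x := by
  by_cases hcase : ordS S s₁ ≤ redNum S
  · exact ord_add_le_l hS h1 hcase hx
  · push_neg at hcase
    obtain ⟨u, huS, huord, heq⟩ := decomp_ord hS h1 (le_of_lt hcase)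
    set a := ordS S s₁ - redNum S with ha
    have huxS : u + x ∈ S := hS.2.1 u huS x hx
    have hr_ux : redNum S ≤ ordS S (u + x) := by
      have := ordS_superadd hS huS hx
      omega
    have hstep : ordS S (a * mult S + (u + x)) ≤ a + ordS S (u + x) :=
      ord_mul_mult_add_le hS huxS hr_ux a
    have heq2 : s₁ + x = a * mult S + (u + x) := by rw [heq, add_assoc]
    have hl : ordS S (u + x) ≤ ordS S u + ordS S x + lS S x :=
      ord_add_le_l hS huS (le_of_eq huord) hx
    rw [heq2]
    omega

end Stmt3Aux

/-- `ord_S(s₁+s₂) ≤ ord_S(s₁) + ord_S(s₂) + min(l_{s₁}(S), l_{s₂}(S))`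
for all `s₁, s₂ ∈ S`. -/
theorem stmt3 (S : Set ℕ) (hS : IsNumSgp S) :
    ∀ s₁ ∈ S, ∀ s₂ ∈ S,
      ordS S (s₁ + s₂) ≤ ordS S s₁ + ordS S s₂ + min (lS S s₁) (lS S s₂) := by
  intro s₁ h₁ s₂ h₂
  have A := ord_add_le_main hS h₁ h₂
  have B := ord_add_le_main hS h₂ h₁
  rw [add_comm s₂ s₁] at B
  omega
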